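/- Let λ_i = 2i-1 for i ∈ ℕ⁺ and Π = [0,2π)ⁿ. There exist constants C, μ₁ = 1, μ₂ = n+1 such that for all γ ∈ (0,1/4) and K ≥ 1, there is a closed subset D(γ,K) ⊂ Π with Meas(Π \ D) ≤ C γ K^{n+1}, such that for all ω ∈ D, all i,j ∈ ℕ⁺ and all nonzero k ∈ ℤⁿ with |k| ≤ K: |k·ω + λ_i - λ_j| ≥ γ(1 + |i-j|). -/

import Mathlib

open MeasureTheory Finset
open scoped ENNReal

lemma measA (n : ℕ) (k : Fin n → ℤ) (c ε : ℝ) :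
    MeasurableSet ((Set.univ.pi fun _ => Set.Ico (0:ℝ) (2*Real.pi)) ∩
      {ω : Fin n → ℝ | |(∑ m, (k m : ℝ) * ω m) + c| < ε}) := by
  apply MeasurableSet.inter
  · exact MeasurableSet.univ_pi fun m => measurableSet_Ico
  · have hm : Measurable fun ω : Fin n → ℝ => |(∑ m, (k m:ℝ) * ω m) + c| := by
      apply Measurable.abs
      apply Measurable.add_const
      exact Finset.measurable_sum _ fun m _ => (measurable_pi_apply m).const_mul _
    exact measurableSet_lt hm measurable_const



lemma oneD (a c ε : ℝ) (ha : a ≠ 0) :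
    volume {t : ℝ | |a * t + c| < ε} ≤ ENNReal.ofReal (2 * ε / |a|) := by
  rcases ha.lt_or_gt with h | h
  · have : {t : ℝ | |a * t + c| < ε} = Set.Ioo ((ε - c)/a) ((-ε - c)/a) := by
      ext t
      simp only [Set.mem_setOf_eq, Set.mem_Ioo, abs_lt]
      rw [div_lt_iff_of_neg h, lt_div_iff_of_neg h]
      constructor <;> intro ⟨h1, h2⟩ <;> constructor <;> linarith
    rw [this, Real.volume_Ioo]
    apply ENNReal.ofReal_le_ofReal
    rw [abs_of_neg h]
    rw [div_sub_div_same, show -ε - c - (ε - c) = -(2*ε) by ring, neg_div, ← div_neg]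
  · have : {t : ℝ | |a * t + c| < ε} = Set.Ioo ((-ε - c)/a) ((ε - c)/a) := by
      ext t
      simp only [Set.mem_setOf_eq, Set.mem_Ioo, abs_lt]
      rw [div_lt_iff₀ h, lt_div_iff₀ h]
      constructor <;> intro ⟨h1, h2⟩ <;> constructor <;> linarith
    rw [this, Real.volume_Ioo]
    apply ENNReal.ofReal_le_ofReal
    rw [abs_of_pos h, div_sub_div_same, div_le_div_iff₀ h h]
    nlinarith

lemma strip (n : ℕ) (k : Fin n → ℤ) (l₀ : Fin n) (hk : k l₀ ≠ 0) (c ε : ℝ) :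
    volume ((Set.univ.pi fun _ => Set.Ico (0:ℝ) (2*Real.pi)) ∩
        {ω : Fin n → ℝ | |(∑ m, (k m : ℝ) * ω m) + c| < ε})
      ≤ ENNReal.ofReal ((2*Real.pi)^(n-1) * (2*ε/|(k l₀ : ℝ)|)) := by
  classical
  set E : Set (Fin n → ℝ) := (Set.univ.pi fun _ => Set.Ico (0:ℝ) (2*Real.pi)) ∩
      {ω : Fin n → ℝ | |(∑ m, (k m : ℝ) * ω m) + c| < ε} with hE
  have hEmeas : MeasurableSet E := by
    apply MeasurableSet.inter
    · exact MeasurableSet.univ_pi fun m => measurableSet_Ico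
    · have hm : Measurable fun ω : Fin n → ℝ => |(∑ m, (k m:ℝ) * ω m) + c| := by
        apply Measurable.abs
        apply Measurable.add_const
        exact Finset.measurable_sum _ fun m _ => (measurable_pi_apply m).const_mul _
      exact measurableSet_lt hm measurable_const
  set p : Fin n → Prop := fun m => m ≠ l₀ with hp
  haveI : Unique {m : Fin n // ¬ p m} :=
    ⟨⟨⟨l₀, not_not_intro rfl⟩⟩, fun x => Subtype.ext (not_not.mp x.2)⟩
  set φ := MeasurableEquiv.piEquivPiSubtypeProd (fun _ : Fin n => ℝ) p with hφdef
  have hφ := volume_preserving_piEquivPiSubtypeProd (fun _ : Fin n => ℝ) p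
  set ψ := MeasurableEquiv.funUnique {m : Fin n // ¬ p m} ℝ with hψdef
  have hψ := volume_preserving_funUnique {m : Fin n // ¬ p m} ℝ
  have h1 : volume E = Measure.prod volume volume (⇑φ.symm ⁻¹' E) := by
    rw [← (hφ.symm _).measure_preimage hEmeas.nullMeasurableSet, ← Measure.volume_eq_prod]
  have hpre : MeasurableSet (⇑φ.symm ⁻¹' E) := hEmeas.preimage φ.symm.measurable
  rw [h1, Measure.prod_apply hpre]
  set Pbox : Set ({m : Fin n // p m} → ℝ) := Set.univ.pi fun _ => Set.Ico (0:ℝ) (2*Real.pi)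
    with hPbox
  have hPboxmeas : MeasurableSet Pbox := MeasurableSet.univ_pi fun m => measurableSet_Ico
  have hslice : ∀ x, volume (Prod.mk x ⁻¹' (⇑φ.symm ⁻¹' E))
      ≤ Pbox.indicator (fun _ => ENNReal.ofReal (2*ε/|(k l₀:ℝ)|)) x := by
    intro x
    have hcoord : ∀ y (m : Fin n), (φ.symm (x, y)) m = if h : p m then x ⟨m, h⟩ else y ⟨m, h⟩ := by
      intro y m
      simp [hφdef, MeasurableEquiv.piEquivPiSubtypeProd,
        Equiv.piEquivPiSubtypeProd_symm_apply]
    by_cases hx : x ∈ Pbox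
    · rw [Set.indicator_of_mem hx]
      set g : Fin n → ℝ := fun m => if h : p m then x ⟨m, h⟩ else 0 with hg
      set C : ℝ := c + ∑ m ∈ Finset.univ.erase l₀, (k m : ℝ) * g m with hC
      have hsub : Prod.mk x ⁻¹' (⇑φ.symm ⁻¹' E)
          ⊆ ⇑ψ ⁻¹' {t : ℝ | |(k l₀:ℝ) * t + C| < ε} := by
        intro y hy
        have hy2 : |(∑ m, (k m:ℝ) * (φ.symm (x, y)) m) + c| < ε := hy.2
        have hsum : (∑ m, (k m:ℝ) * (φ.symm (x, y)) m) + c = (k l₀:ℝ) * ψ y + C := by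
          rw [← Finset.add_sum_erase _ _ (Finset.mem_univ l₀)]
          have h1' : (φ.symm (x, y)) l₀ = ψ y := by
            rw [hcoord y l₀, dif_neg (not_not_intro rfl)]
            exact congrArg y (Subsingleton.elim _ _)
          have h2' : ∀ m ∈ Finset.univ.erase l₀, (k m:ℝ) * (φ.symm (x, y)) m
              = (k m:ℝ) * g m := by
            intro m hm
            have hm' : p m := Finset.ne_of_mem_erase hm
            rw [hcoord y m, dif_pos hm', hg]
            simp [dif_pos hm']
          rw [Finset.sum_congr rfl h2', h1', hC]
          ring
        rw [hsum] at hy2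
        exact hy2
      have hS : MeasurableSet {t : ℝ | |(k l₀:ℝ) * t + C| < ε} := by
        have hm : Measurable fun t : ℝ => |(k l₀:ℝ) * t + C| :=
          ((measurable_id.const_mul _).add_const _).abs
        exact measurableSet_lt hm measurable_const
      calc volume (Prod.mk x ⁻¹' (⇑φ.symm ⁻¹' E))
          ≤ volume (⇑ψ ⁻¹' {t : ℝ | |(k l₀:ℝ) * t + C| < ε}) := measure_mono hsub
        _ = volume {t : ℝ | |(k l₀:ℝ) * t + C| < ε} := by
            have hψy : ∀ y : {m : Fin n // ¬ p m} → ℝ, ψ y = y default := fun y =>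
              congrArg y (Subsingleton.elim _ _)
            have hset : (⇑ψ ⁻¹' {t : ℝ | |(k l₀:ℝ) * t + C| < ε})
                = Set.univ.pi (fun _ : {m : Fin n // ¬ p m} =>
                    {t : ℝ | |(k l₀:ℝ) * t + C| < ε}) := by
              ext y
              simp only [Set.mem_preimage, Set.mem_pi, Set.mem_univ, true_implies, hψy]
              exact ⟨fun h i => by rwa [Subsingleton.elim i default], fun h => h default⟩
            rw [hset, volume_pi, Measure.pi_pi, Finset.prod_const, Finset.card_univ,
              Fintype.card_unique, pow_one]
        _ ≤ ENNReal.ofReal (2*ε/|(k l₀:ℝ)|) := by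
            apply oneD
            exact_mod_cast hk
    · rw [Set.indicator_of_notMem hx]
      have hempty : Prod.mk x ⁻¹' (⇑φ.symm ⁻¹' E) = ∅ := by
        ext y
        simp only [Set.mem_preimage, Set.mem_empty_iff_false, iff_false]
        intro hy
        rw [hPbox, Set.mem_pi] at hx
        push_neg at hx
        obtain ⟨m, _, hm⟩ := hx
        have h1' : (φ.symm (x, y)) m.1 ∈ Set.Ico (0:ℝ) (2*Real.pi) :=
          hy.1 m.1 (Set.mem_univ _)
        have h2' : (φ.symm (x, y)) m.1 = x m := by
          rw [hcoord y m.1, dif_pos m.2]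
        rw [h2'] at h1'
        exact hm h1'
      rw [hempty, measure_empty]
  calc ∫⁻ x, volume (Prod.mk x ⁻¹' (⇑φ.symm ⁻¹' E))
      ≤ ∫⁻ x, Pbox.indicator (fun _ => ENNReal.ofReal (2*ε/|(k l₀:ℝ)|)) x :=
        lintegral_mono hslice
    _ = ENNReal.ofReal (2*ε/|(k l₀:ℝ)|) * volume Pbox := lintegral_indicator_const hPboxmeas _
    _ ≤ ENNReal.ofReal (2*ε/|(k l₀:ℝ)|) * ENNReal.ofReal ((2*Real.pi)^(n-1)) := by
        apply mul_le_mul_right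
        have : volume Pbox = ENNReal.ofReal (2*Real.pi - 0) ^ (Fintype.card {m : Fin n // p m}) := by
          rw [hPbox, volume_pi, Measure.pi_pi]
          simp [Real.volume_Ico]
        rw [this]
        have hcard : Fintype.card {m : Fin n // p m} = n - 1 := by
          simp only [hp]
          rw [Fintype.card_subtype_compl, Fintype.card_subtype_eq, Fintype.card_fin]
        rw [hcard, sub_zero, ← ENNReal.ofReal_pow (le_of_lt Real.two_pi_pos)]
    _ = ENNReal.ofReal ((2*Real.pi)^(n-1) * (2*ε/|(k l₀:ℝ)|)) := by
        rw [mul_comm, ← ENNReal.ofReal_mul (pow_nonneg (le_of_lt Real.two_pi_pos) _)]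


theorem stmt14 (n : ℕ) (hn : 0 < n) :
    ∃ C : ℝ, 0 < C ∧ ∀ γ K : ℝ, γ ∈ Set.Ioo (0:ℝ) (1/4) → 1 ≤ K →
    ∃ D : Set (Fin n → ℝ),
      D ⊆ Set.univ.pi (fun _ => Set.Ico (0:ℝ) (2*Real.pi)) ∧
      MeasurableSet D ∧
      volume ((Set.univ.pi fun _ => Set.Ico (0:ℝ) (2*Real.pi)) \ D)
        ≤ ENNReal.ofReal (C * γ * K ^ (n+1)) ∧
      ∀ ω ∈ D, ∀ i j : ℕ+, ∀ k : Fin n → ℤ, k ≠ 0 →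
        (∑ l, (|k l| : ℝ)) ≤ K →
        γ * (1 + |(i:ℝ) - (j:ℝ)|)
          ≤ |(∑ l, (k l : ℝ) * ω l) + (2*(i:ℝ)-1) - (2*(j:ℝ)-1)| := by
  classical
  have hnR : (0:ℝ) < n := by exact_mod_cast hn
  have hπ : (0:ℝ) < Real.pi := Real.pi_pos
  refine ⟨3^n * 17 * 10 * n * (2*Real.pi)^(n-1), by positivity, ?_⟩
  intro γ K hγ hK
  obtain ⟨hγ0, hγ14⟩ := hγ
  have hK0 : (0:ℝ) ≤ K := le_trans zero_le_one hK
  set K' : ℤ := ⌊K⌋ with hK'def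
  have hK'1 : 1 ≤ K' := by
    rw [hK'def]
    exact_mod_cast Int.le_floor.mpr (by exact_mod_cast hK)
  have hK'le : (K' : ℝ) ≤ K := Int.floor_le K
  have hK'ge : K - 1 < (K' : ℝ) := Int.sub_one_lt_floor K
  set L : ℤ := 4*K' + 4 with hLdef
  set PBox : Set (Fin n → ℝ) := Set.univ.pi fun _ => Set.Ico (0:ℝ) (2*Real.pi) with hPBox
  set A : (Fin n → ℤ) × ℤ → Set (Fin n → ℝ) := fun q =>
    PBox ∩ {ω : Fin n → ℝ | |(∑ m, (q.1 m : ℝ) * ω m) + 2*(q.2:ℝ)|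
      < γ * (1 + |(q.2:ℝ)|)} with hA
  set F : Finset (Fin n → ℤ) :=
    (Fintype.piFinset fun _ : Fin n => Finset.Icc (-K') K') \ {0} with hF
  set S : Finset ((Fin n → ℤ) × ℤ) := F ×ˢ Finset.Icc (-L) L with hS
  have hPBoxmeas : MeasurableSet PBox := MeasurableSet.univ_pi fun m => measurableSet_Ico
  have hAmeas : ∀ q, MeasurableSet (A q) := fun q => measA n q.1 _ _
  refine ⟨PBox \ ⋃ q ∈ S, A q, Set.diff_subset, hPBoxmeas.diff
    (S.measurableSet_biUnion fun q _ => hAmeas q), ?_, ?_⟩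
  · -- measure bound
    have hsub : PBox \ (PBox \ ⋃ q ∈ S, A q) ⊆ ⋃ q ∈ S, A q := by
      intro ω hω
      rcases hω with ⟨h1, h2⟩
      by_contra h3
      exact h2 ⟨h1, h3⟩
    have hbound : ∀ q ∈ S, volume (A q)
        ≤ ENNReal.ofReal ((2*Real.pi)^(n-1) * (10*n*γ)) := by
      rintro ⟨k, l⟩ hq
      rw [hS, Finset.mem_product] at hq
      obtain ⟨hk1, hl1⟩ := hq
      rw [Finset.mem_sdiff] at hk1
      obtain ⟨hkpi, hk0'⟩ := hk1
      have hk0 : k ≠ 0 := by simpa using hk0'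
      set T : ℤ := ∑ m, |k m| with hT
      have hT1 : 1 ≤ T := by
        by_contra hc
        push_neg at hc
        have : T = 0 := le_antisymm (by omega) (Finset.sum_nonneg fun m _ => abs_nonneg _)
        have : ∀ m ∈ Finset.univ, |k m| = 0 :=
          (Finset.sum_eq_zero_iff_of_nonneg fun m _ => abs_nonneg _).mp this
        exact hk0 (funext fun m => abs_eq_zero.mp (this m (Finset.mem_univ m)))
      by_cases hl4 : |l| ≤ 4*T
      · -- strip case
        haveI : Nonempty (Fin n) := ⟨⟨0, hn⟩⟩
        obtain ⟨l₀, _, hl₀⟩ := Finset.exists_max_image Finset.univ (fun m => |k m|)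
          Finset.univ_nonempty
        have hTn : T ≤ n * |k l₀| := by
          calc T = ∑ m, |k m| := hT
            _ ≤ ∑ _m : Fin n, |k l₀| :=
              Finset.sum_le_sum fun m _ => hl₀ m (Finset.mem_univ m)
            _ = n * |k l₀| := by simp [mul_comm]
        have hkl₀ : k l₀ ≠ 0 := by
          intro h
          rw [h] at hTn
          simp at hTn
          omega
        refine le_trans (strip n k l₀ hkl₀ _ _) (ENNReal.ofReal_le_ofReal ?_)
        apply mul_le_mul_of_nonneg_left _ (pow_nonneg (by positivity) _)
        have ha1 : (1:ℝ) ≤ |(k l₀ : ℝ)| := by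
          rw [← Int.cast_abs]
          exact_mod_cast Int.one_le_abs hkl₀
        rw [div_le_iff₀ (by linarith)]
        have hlr : |(l:ℝ)| ≤ 4 * (T:ℝ) := by
          rw [← Int.cast_abs]
          exact_mod_cast hl4
        have hTnr : (T:ℝ) ≤ n * |(k l₀:ℝ)| := by
          rw [← Int.cast_abs]
          exact_mod_cast hTn
        have hT1r : (1:ℝ) ≤ (T:ℝ) := by exact_mod_cast hT1
        nlinarith [mul_le_mul_of_nonneg_left hTnr (le_of_lt hγ0),
          mul_le_mul_of_nonneg_left hlr (le_of_lt hγ0), abs_nonneg ((l:ℝ))]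
      · -- empty case
        push_neg at hl4
        have : A (k, l) = ∅ := by
          rw [Set.eq_empty_iff_forall_notMem]
          rintro ω ⟨hω1, hω2⟩
          simp only [Set.mem_setOf_eq] at hω2
          have hsum : |∑ m, (k m:ℝ) * ω m| ≤ 2*Real.pi * (T:ℝ) := by
            calc |∑ m, (k m:ℝ) * ω m| ≤ ∑ m, |(k m:ℝ) * ω m| :=
                Finset.abs_sum_le_sum_abs _ _
              _ ≤ ∑ m, |(k m:ℝ)| * (2*Real.pi) := by
                apply Finset.sum_le_sum
                intro m _
                rw [abs_mul]
                apply mul_le_mul_of_nonneg_left _ (abs_nonneg _)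
                have := hω1 m (Set.mem_univ m)
                rw [abs_of_nonneg this.1]
                exact le_of_lt this.2
              _ = 2*Real.pi * (T:ℝ) := by
                rw [← Finset.sum_mul, hT]
                push_cast
                ring
          have hlr : 4 * (T:ℝ) + 1 ≤ |(l:ℝ)| := by
            rw [← Int.cast_abs]
            exact_mod_cast by omega
          have hT1r : (1:ℝ) ≤ (T:ℝ) := by exact_mod_cast hT1
          have habs : 2 * |(l:ℝ)| - 2*Real.pi*(T:ℝ) ≤ |(∑ m, (k m:ℝ) * ω m) + 2*(l:ℝ)| := by
            have h0 := abs_add_le ((∑ m, (k m:ℝ) * ω m) + 2*(l:ℝ)) (-(∑ m, (k m:ℝ) * ω m))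
            rw [show (∑ m, (k m:ℝ) * ω m) + 2*(l:ℝ) + -(∑ m, (k m:ℝ) * ω m) = 2*(l:ℝ)
              by ring, abs_neg, abs_mul, abs_two] at h0
            linarith
          have hπ35 : Real.pi < 3.15 := Real.pi_lt_d2
          nlinarith [abs_nonneg ((l:ℝ))]
        rw [this, measure_empty]
        exact zero_le
    calc volume (PBox \ (PBox \ ⋃ q ∈ S, A q)) ≤ volume (⋃ q ∈ S, A q) := measure_mono hsub
      _ ≤ ∑ q ∈ S, volume (A q) := measure_biUnion_finset_le _ _
      _ ≤ ∑ _q ∈ S, ENNReal.ofReal ((2*Real.pi)^(n-1) * (10*n*γ)) :=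
          Finset.sum_le_sum hbound
      _ = (S.card : ℝ≥0∞) * ENNReal.ofReal ((2*Real.pi)^(n-1) * (10*n*γ)) := by
          rw [Finset.sum_const, nsmul_eq_mul]
      _ ≤ ENNReal.ofReal (3^n * 17 * 10 * n * (2*Real.pi)^(n-1) * γ * K^(n+1)) := by
          rw [← ENNReal.ofReal_natCast, ← ENNReal.ofReal_mul (Nat.cast_nonneg _)]
          apply ENNReal.ofReal_le_ofReal
          have hcard : (S.card : ℝ) ≤ (3*K)^n * (17*K) := by
            have h1 : F.card ≤ (2*K'+1).toNat ^ n := by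
              rw [hF]
              calc _ ≤ (Fintype.piFinset fun _ : Fin n => Finset.Icc (-K') K').card :=
                    Finset.card_le_card (Finset.sdiff_subset)
                _ = (2*K'+1).toNat ^ n := by
                  rw [Fintype.card_piFinset]
                  have : (Finset.Icc (-K') K').card = (2*K'+1).toNat := by
                    rw [Int.card_Icc]
                    congr 1
                    omega
                  simp [this]
            have h2 : (Finset.Icc (-L) L).card = (2*L+1).toNat := by
              rw [Int.card_Icc]
              congr 1
              omega
            rw [hS, Finset.card_product, h2]
            push_cast
            have h3 : (((2*K'+1).toNat : ℝ)) ≤ 3*K := by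
              have h0 : (0:ℤ) ≤ 2*K'+1 := by omega
              have he : (((2*K'+1).toNat : ℕ) : ℝ) = 2*(K':ℝ)+1 := by
                exact_mod_cast congrArg (Int.cast : ℤ → ℝ) (Int.toNat_of_nonneg h0)
              rw [he]
              linarith
            have hLr : (L:ℝ) = 4*(K':ℝ) + 4 := by
              rw [hLdef]; push_cast; ring
            have h4 : (((2*L+1).toNat : ℝ)) ≤ 17*K := by
              have h0 : (0:ℤ) ≤ 2*L+1 := by omega
              have he : (((2*L+1).toNat : ℕ) : ℝ) = 2*(L:ℝ)+1 := by
                exact_mod_cast congrArg (Int.cast : ℤ → ℝ) (Int.toNat_of_nonneg h0)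
              rw [he, hLr]
              linarith
            calc (F.card : ℝ) * (((2*L+1).toNat : ℝ))
                ≤ (((2*K'+1).toNat ^ n : ℕ) : ℝ) * (17*K) := by
                  apply mul_le_mul _ h4 (Nat.cast_nonneg _) (Nat.cast_nonneg _)
                  exact_mod_cast h1
              _ ≤ (3*K)^n * (17*K) := by
                  apply mul_le_mul_of_nonneg_right _ (by linarith)
                  push_cast
                  exact pow_le_pow_left₀ (Nat.cast_nonneg _) h3 n
          have heq : 3^n * 17 * 10 * (n:ℝ) * (2*Real.pi)^(n-1) * γ * K^(n+1)
              = ((3*K)^n * (17*K)) * ((2*Real.pi)^(n-1) * (10*n*γ)) := by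
            rw [mul_pow, pow_succ]
            ring
          rw [heq]
          apply mul_le_mul_of_nonneg_right hcard
          positivity
  · -- Diophantine property
    rintro ω ⟨hω1, hω2⟩ i j k hk0 hkK
    obtain ⟨z, hz⟩ : ∃ z : ℤ, (z:ℝ) = (i:ℝ) - (j:ℝ) :=
      ⟨(i:ℤ) - (j:ℤ), by push_cast; ring⟩
    have hgoal : (∑ l, (k l : ℝ) * ω l) + (2*(i:ℝ)-1) - (2*(j:ℝ)-1)
        = (∑ l, (k l : ℝ) * ω l) + 2*(z:ℝ) := by
      rw [hz]; ring
    have habsz : |(i:ℝ) - (j:ℝ)| = |(z:ℝ)| := by rw [hz]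
    rw [hgoal, habsz]
    by_contra hcon
    push_neg at hcon
    by_cases hzL : |z| ≤ L
    · -- ω lands in a removed strip
      have hkS : (k, z) ∈ S := by
        rw [hS, Finset.mem_product]
        refine ⟨hF ▸ Finset.mem_sdiff.mpr ⟨?_, by simpa using hk0⟩, ?_⟩
        · rw [Fintype.mem_piFinset]
          intro m
          rw [Finset.mem_Icc, ← abs_le]
          have h1 : (|k m| : ℝ) ≤ K := by
            refine le_trans ?_ hkK
            exact Finset.single_le_sum (f := fun l => (|k l| : ℝ))
              (fun l _ => by positivity) (Finset.mem_univ m)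
          rw [hK'def]
          exact Int.le_floor.mpr (by exact_mod_cast h1)
        · rw [Finset.mem_Icc, ← abs_le]
          exact hzL
      have : ω ∈ A (k, z) := ⟨hω1, hcon⟩
      exact hω2 (Set.mem_biUnion hkS this)
    · -- |z| large: automatic
      push_neg at hzL
      have hsum : |∑ m, (k m:ℝ) * ω m| ≤ 2*Real.pi * K := by
        calc |∑ m, (k m:ℝ) * ω m| ≤ ∑ m, |(k m:ℝ) * ω m| :=
            Finset.abs_sum_le_sum_abs _ _
          _ ≤ ∑ m, |(k m:ℝ)| * (2*Real.pi) := by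
            apply Finset.sum_le_sum
            intro m _
            rw [abs_mul]
            apply mul_le_mul_of_nonneg_left _ (abs_nonneg _)
            have := hω1 m (Set.mem_univ m)
            rw [abs_of_nonneg this.1]
            exact le_of_lt this.2
          _ = (∑ m, (|k m| : ℝ)) * (2*Real.pi) := by
            rw [← Finset.sum_mul]
          _ ≤ 2*Real.pi * K := by
            rw [mul_comm]
            exact mul_le_mul_of_nonneg_left hkK (by positivity)
      have hzr : 4*K + 1 ≤ |(z:ℝ)| := by
        have h1 : (L:ℝ) + 1 ≤ |(z:ℝ)| := by
          rw [← Int.cast_abs]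
          exact_mod_cast by omega
        rw [hLdef] at h1
        push_cast at h1
        linarith
      have habs : 2 * |(z:ℝ)| - 2*Real.pi*K ≤ |(∑ m, (k m:ℝ) * ω m) + 2*(z:ℝ)| := by
        have h0 := abs_add_le ((∑ m, (k m:ℝ) * ω m) + 2*(z:ℝ)) (-(∑ m, (k m:ℝ) * ω m))
        rw [show (∑ m, (k m:ℝ) * ω m) + 2*(z:ℝ) + -(∑ m, (k m:ℝ) * ω m) = 2*(z:ℝ)
          by ring, abs_neg, abs_mul, abs_two] at h0
        linarith
      have hπ35 : Real.pi < 3.15 := Real.pi_lt_d2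
      nlinarith [abs_nonneg ((z:ℝ))]
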